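/- Let φ be m_φ-weakly convex, g proper closed convex, and 0 < μ < 1/m_φ. Then the gradient of Ψ_μ := M_{μφ} − M_{μg} is Lipschitz continuous with constant (2 − μm_φ)/(μ − μ²m_φ). -/
import Mathlib


open scoped RealInnerProductSpace

private lemma prox_key {E : Type*} [NormedAddCommGroup E] [InnerProductSpace ℝ E]
    (f : E → ℝ) (c : ℝ) (hc : 0 < c) (hf : ConvexOn ℝ Set.univ f)
    (p z q : E) (hp : ∀ y, f p + c * ‖p - z‖ ^ 2 ≤ f y + c * ‖y - z‖ ^ 2) :
    f p ≤ f q + 2 * c * ⟪p - z, q - p⟫ := by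
  apply le_of_forall_pos_le_add
  intro ε hε
  set K : ℝ := c * ‖q - p‖ ^ 2 with hK
  have hK0 : 0 ≤ K := by positivity
  set t : ℝ := min 1 (ε / (K + 1)) with ht
  have ht0 : 0 < t := lt_min one_pos (by positivity)
  have ht1 : t ≤ 1 := min_le_left _ _
  have hconv := hf.2 (Set.mem_univ p) (Set.mem_univ q)
    (by linarith : (0:ℝ) ≤ 1 - t) ht0.le (by ring)
  have hy := hp ((1 - t) • p + t • q)
  have hvec : (1 - t) • p + t • q - z = (p - z) + t • (q - p) := by module
  have hnorm : ‖(p - z) + t • (q - p)‖ ^ 2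
      = ‖p - z‖ ^ 2 + 2 * t * ⟪p - z, q - p⟫ + t ^ 2 * ‖q - p‖ ^ 2 := by
    rw [norm_add_sq_real, real_inner_smul_right, norm_smul, Real.norm_eq_abs,
      abs_of_pos ht0]
    ring
  rw [hvec, hnorm] at hy
  have htK : t * K ≤ ε := by
    have h1 : t ≤ ε / (K + 1) := min_le_right _ _
    have h2 : t * K ≤ (ε / (K + 1)) * K := by nlinarith
    calc t * K ≤ (ε / (K + 1)) * K := h2
      _ ≤ ε := by rw [div_mul_eq_mul_div, div_le_iff₀ (by linarith)]; nlinarith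
  have hconv' : f ((1 - t) • p + t • q) ≤ (1 - t) * f p + t * f q := by
    simpa using hconv
  nlinarith [hy, hconv', mul_pos ht0 ht0, sq_nonneg t]

private lemma prox_nonexp {E : Type*} [NormedAddCommGroup E] [InnerProductSpace ℝ E]
    (f : E → ℝ) (c : ℝ) (hc : 0 < c) (hf : ConvexOn ℝ Set.univ f)
    (p : E → E) (hp : ∀ z y, f (p z) + c * ‖p z - z‖ ^ 2 ≤ f y + c * ‖y - z‖ ^ 2) :
    ∀ z z', ‖p z - p z'‖ ≤ ‖z - z'‖ := by
  intro z z'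
  have h1 := prox_key f c hc hf (p z) z (p z') (hp z)
  have h2 := prox_key f c hc hf (p z') z' (p z) (hp z')
  have e1 : ⟪p z - z, p z' - p z⟫ + ⟪p z' - z', p z - p z'⟫
      = ⟪z - z', p z - p z'⟫ - ‖p z - p z'‖ ^ 2 := by
    simp only [← real_inner_self_eq_norm_sq, inner_sub_left, inner_sub_right]
    linarith [real_inner_comm (p z) (p z')]
  have key : ‖p z - p z'‖ ^ 2 ≤ ⟪z - z', p z - p z'⟫ := by nlinarith [h1, h2, e1]
  have hcs := real_inner_le_norm (z - z') (p z - p z')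
  rcases eq_or_lt_of_le (norm_nonneg (p z - p z')) with h | h
  · rw [← h]; exact norm_nonneg _
  · have hm : ‖p z - p z'‖ * ‖p z - p z'‖ ≤ ‖z - z'‖ * ‖p z - p z'‖ := by nlinarith
    exact le_of_mul_le_mul_right hm h

/-- The gradient `∇Ψ_μ(z) = μ⁻¹(prox_{μg}(z) − prox_{μφ}(z))` of the DME
smoothing is Lipschitz continuous with constant `(2 − μ m_φ)/(μ − μ² m_φ)`. -/
theorem stmt5 {n : ℕ} (φ g : EuclideanSpace ℝ (Fin n) → ℝ) (mφ μ : ℝ)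
    (hm : 0 < mφ) (hμ : 0 < μ) (hμm : μ < 1 / mφ)
    (hφclosed : LowerSemicontinuous φ)
    (hφweak : ConvexOn ℝ Set.univ (fun x => φ x + mφ / 2 * ‖x‖ ^ 2))
    (hgconv : ConvexOn ℝ Set.univ g) (hgclosed : LowerSemicontinuous g)
    (proxφ proxg : EuclideanSpace ℝ (Fin n) → EuclideanSpace ℝ (Fin n))
    (hproxφ : ∀ z y, φ (proxφ z) + 1 / (2 * μ) * ‖proxφ z - z‖ ^ 2 ≤
      φ y + 1 / (2 * μ) * ‖y - z‖ ^ 2)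
    (hproxg : ∀ z y, g (proxg z) + 1 / (2 * μ) * ‖proxg z - z‖ ^ 2 ≤
      g y + 1 / (2 * μ) * ‖y - z‖ ^ 2) :
    ∀ z z', ‖(1 / μ) • (proxg z - proxφ z) - (1 / μ) • (proxg z' - proxφ z')‖ ≤
      ((2 - μ * mφ) / (μ - μ ^ 2 * mφ)) * ‖z - z'‖ := by
  have hμm' : μ * mφ < 1 := by
    have := (lt_div_iff₀ hm).mp hμm; linarith
  set lam : ℝ := 1 - μ * mφ with hlam
  have hlam0 : 0 < lam := by simp only [hlam]; linarith
  have hcμ : (0:ℝ) < 1 / (2 * μ) := by positivity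
  -- g prox is nonexpansive
  have hgL : ∀ z z', ‖proxg z - proxg z'‖ ≤ ‖z - z'‖ :=
    prox_nonexp g (1 / (2 * μ)) hcμ hgconv proxg (fun z y => hproxg z y)
  -- φ prox: reduce to the convex function ψ
  set ψ : EuclideanSpace ℝ (Fin n) → ℝ := fun x => φ x + mφ / 2 * ‖x‖ ^ 2 with hψ
  set c' : ℝ := lam / (2 * μ) with hc'
  have hc'0 : 0 < c' := by positivity
  set P : EuclideanSpace ℝ (Fin n) → EuclideanSpace ℝ (Fin n) :=
    fun w => proxφ (lam • w) with hP
  have hid : ∀ (w u : EuclideanSpace ℝ (Fin n)),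
      ψ u + c' * ‖u - w‖ ^ 2
        = φ u + 1 / (2 * μ) * ‖u - lam • w‖ ^ 2 + (c' - 1 / (2 * μ) * lam ^ 2) * ‖w‖ ^ 2 := by
    intro w u
    have e1 : ‖u - w‖ ^ 2 = ‖u‖ ^ 2 - 2 * ⟪u, w⟫ + ‖w‖ ^ 2 := by
      rw [norm_sub_sq_real]
    have e2 : ‖u - lam • w‖ ^ 2 = ‖u‖ ^ 2 - 2 * lam * ⟪u, w⟫ + lam ^ 2 * ‖w‖ ^ 2 := by
      rw [norm_sub_sq_real, real_inner_smul_right, norm_smul, Real.norm_eq_abs,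
        abs_of_pos hlam0]; ring
    simp only [hψ, hc', hlam]
    rw [e1, e2]
    field_simp
    ring
  have hPprox : ∀ w y, ψ (P w) + c' * ‖P w - w‖ ^ 2 ≤ ψ y + c' * ‖y - w‖ ^ 2 := by
    intro w y
    have h := hproxφ (lam • w) y
    rw [hid w (P w), hid w y]
    simp only [hP]
    linarith
  have hPL : ∀ w w', ‖P w - P w'‖ ≤ ‖w - w'‖ :=
    prox_nonexp ψ c' hc'0 hφweak P hPprox
  have hφL : ∀ z z', ‖proxφ z - proxφ z'‖ ≤ lam⁻¹ * ‖z - z'‖ := by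
    intro z z'
    have hsc : ∀ z : EuclideanSpace ℝ (Fin n), P (lam⁻¹ • z) = proxφ z := by
      intro z
      simp only [hP, smul_smul, mul_inv_cancel₀ hlam0.ne', one_smul]
    have := hPL (lam⁻¹ • z) (lam⁻¹ • z')
    rw [hsc, hsc, ← smul_sub, norm_smul, Real.norm_eq_abs,
      abs_of_pos (inv_pos.mpr hlam0)] at this
    exact this
  intro z z'
  rw [← smul_sub, norm_smul, Real.norm_eq_abs, abs_of_pos (by positivity : (0:ℝ) < 1/μ)]
  have hsplit : ‖proxg z - proxφ z - (proxg z' - proxφ z')‖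
      ≤ ‖proxg z - proxg z'‖ + ‖proxφ z - proxφ z'‖ := by
    have : proxg z - proxφ z - (proxg z' - proxφ z')
        = (proxg z - proxg z') - (proxφ z - proxφ z') := by abel
    rw [this]
    exact norm_sub_le _ _
  have hbound : ‖proxg z - proxφ z - (proxg z' - proxφ z')‖
      ≤ (1 + lam⁻¹) * ‖z - z'‖ := by
    calc ‖proxg z - proxφ z - (proxg z' - proxφ z')‖
        ≤ ‖proxg z - proxg z'‖ + ‖proxφ z - proxφ z'‖ := hsplit
      _ ≤ ‖z - z'‖ + lam⁻¹ * ‖z - z'‖ := add_le_add (hgL z z') (hφL z z')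
      _ = (1 + lam⁻¹) * ‖z - z'‖ := by ring
  have hconst : (1 / μ) * (1 + lam⁻¹) = (2 - μ * mφ) / (μ - μ ^ 2 * mφ) := by
    simp only [hlam]
    have h2 : (1 : ℝ) - μ * mφ ≠ 0 := by nlinarith
    have h3 : μ - μ ^ 2 * mφ ≠ 0 := by nlinarith
    field_simp
    ring
  calc (1 / μ) * ‖proxg z - proxφ z - (proxg z' - proxφ z')‖
      ≤ (1 / μ) * ((1 + lam⁻¹) * ‖z - z'‖) := by
        apply mul_le_mul_of_nonneg_left hbound (by positivity)
    _ = ((2 - μ * mφ) / (μ - μ ^ 2 * mφ)) * ‖z - z'‖ := by rw [← mul_assoc, hconst]
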